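/- Let m₁, m₂, ν₁, ν₂ > 0 satisfy m₁ + ν₁ ≥ m₂ + ν₂ and m₁/ν₁ ≥ m₂/ν₂. Then for all u > 0 and 0 < w < 1, h(u,w) ≥ K₀ · u^{(m₁+m₂)/2−1} · w^{m₁/2−1} · (1−w)^{m₂/2−1} · (1 + m₁u/(2ν₁))^{−(m₁+ν₁)}, where h(u,w) = K₀ · u^{(m₁+m₂)/2−1} · w^{m₁/2−1} · (1−w)^{m₂/2−1} · (1 + m₁uw/ν₁)^{−(m₁+ν₁)/2} · (1 + m₂u(1−w)/ν₂)^{−(m₂+ν₂)/2}. -/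
import Mathlib


open Real MeasureTheory Set

/-- Beta function `B(a,b) = Γ(a)Γ(b)/Γ(a+b)`. -/
noncomputable def Beta (a b : ℝ) : ℝ := Gamma a * Gamma b / Gamma (a + b)

/-- The normalizing constant `K₀`. -/
noncomputable def K₀ (m₁ m₂ ν₁ ν₂ : ℝ) : ℝ :=
  (m₁ / ν₁) ^ (m₁ / 2) * (m₂ / ν₂) ^ (m₂ / 2) /
    (Beta (m₁ / 2) (ν₁ / 2) * Beta (m₂ / 2) (ν₂ / 2))

lemma Beta_pos {a b : ℝ} (ha : 0 < a) (hb : 0 < b) : 0 < Beta a b :=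
  div_pos (mul_pos (Real.Gamma_pos_of_pos ha) (Real.Gamma_pos_of_pos hb))
    (Real.Gamma_pos_of_pos (by linarith))

lemma K₀_pos {m₁ m₂ ν₁ ν₂ : ℝ} (hm₁ : 0 < m₁) (hm₂ : 0 < m₂) (hν₁ : 0 < ν₁)
    (hν₂ : 0 < ν₂) : 0 < K₀ m₁ m₂ ν₁ ν₂ := by
  unfold K₀
  have h1 := Beta_pos (half_pos hm₁) (half_pos hν₁)
  have h2 := Beta_pos (half_pos hm₂) (half_pos hν₂)
  have := Real.rpow_pos_of_pos (div_pos hm₁ hν₁) (m₁ / 2)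
  have := Real.rpow_pos_of_pos (div_pos hm₂ hν₂) (m₂ / 2)
  positivity

/-- Lower bound on the joint density `h(u,w)`: if `m₁ + ν₁ ≥ m₂ + ν₂` and
`m₁/ν₁ ≥ m₂/ν₂`, then for `u > 0` and `0 < w < 1`,
`h(u,w) ≥ K₀ u^{(m₁+m₂)/2−1} w^{m₁/2−1} (1−w)^{m₂/2−1} (1 + m₁u/(2ν₁))^{−(m₁+ν₁)}`. -/
theorem hDens_lower_bound (m₁ m₂ ν₁ ν₂ : ℝ)
    (hm₁ : 0 < m₁) (hm₂ : 0 < m₂) (hν₁ : 0 < ν₁) (hν₂ : 0 < ν₂)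
    (hsum : m₂ + ν₂ ≤ m₁ + ν₁) (hratio : m₂ / ν₂ ≤ m₁ / ν₁)
    (u w : ℝ) (hu : 0 < u) (hw0 : 0 < w) (hw1 : w < 1) :
    K₀ m₁ m₂ ν₁ ν₂ * u ^ ((m₁ + m₂) / 2 - 1) * w ^ (m₁ / 2 - 1) * (1 - w) ^ (m₂ / 2 - 1) *
        (1 + m₁ * u / (2 * ν₁)) ^ (-(m₁ + ν₁)) ≤
      K₀ m₁ m₂ ν₁ ν₂ * u ^ ((m₁ + m₂) / 2 - 1) * w ^ (m₁ / 2 - 1) * (1 - w) ^ (m₂ / 2 - 1) *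
        (1 + m₁ * u * w / ν₁) ^ (-(m₁ + ν₁) / 2) *
        (1 + m₂ * u * (1 - w) / ν₂) ^ (-(m₂ + ν₂) / 2) := by
  have hw1' : 0 < 1 - w := by linarith
  set C : ℝ := 1 + m₁ * u / (2 * ν₁) with hC
  set X : ℝ := 1 + m₁ * u * w / ν₁ with hX
  set Y : ℝ := 1 + m₁ * u * (1 - w) / ν₁ with hY
  set Z : ℝ := 1 + m₂ * u * (1 - w) / ν₂ with hZ
  set p : ℝ := (m₁ + ν₁) / 2 with hp
  set q : ℝ := (m₂ + ν₂) / 2 with hq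
  have hCpos : 0 < C := by
    have h : 0 < m₁ * u / (2 * ν₁) := by positivity
    simp only [hC]; linarith
  have hXpos : 0 < X := by
    have h : 0 < m₁ * u * w / ν₁ := by positivity
    simp only [hX]; linarith
  have hY1 : 1 ≤ Y := by
    have h : 0 ≤ m₁ * u * (1 - w) / ν₁ := by positivity
    simp only [hY]; linarith
  have hZpos : 0 < Z := by
    have h : 0 < m₂ * u * (1 - w) / ν₂ := by positivity
    simp only [hZ]; linarith
  have hZY : Z ≤ Y := by
    have : m₂ * u * (1 - w) / ν₂ ≤ m₁ * u * (1 - w) / ν₁ := by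
      have h1 : m₂ * u * (1 - w) / ν₂ = (m₂ / ν₂) * (u * (1 - w)) := by ring
      have h2 : m₁ * u * (1 - w) / ν₁ = (m₁ / ν₁) * (u * (1 - w)) := by ring
      rw [h1, h2]
      exact mul_le_mul_of_nonneg_right hratio (by positivity)
    simp only [hZ, hY]; linarith
  have hqp : q ≤ p := by simp only [hp, hq]; linarith
  have hq0 : 0 ≤ q := by positivity
  -- key: X^p * Z^q ≤ C^(2*p)
  have key : X ^ p * Z ^ q ≤ C ^ (2 * p) := by
    have h1 : Z ^ q ≤ Y ^ q := Real.rpow_le_rpow hZpos.le hZY hq0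
    have h2 : Y ^ q ≤ Y ^ p := Real.rpow_le_rpow_of_exponent_le hY1 hqp
    have h3 : X ^ p * Y ^ p = (X * Y) ^ p := (Real.mul_rpow hXpos.le (by linarith)).symm
    have hXY : X * Y ≤ C ^ (2 : ℕ) := by
      have hw : w * (1 - w) ≤ 1 / 4 := by nlinarith [sq_nonneg (1 - 2 * w)]
      have hν₁' : ν₁ ≠ 0 := hν₁.ne'
      simp only [hX, hY, hC]
      have expand : (1 + m₁ * u / (2 * ν₁)) ^ (2:ℕ) - (1 + m₁ * u * w / ν₁) * (1 + m₁ * u * (1 - w) / ν₁)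
          = (m₁ * u / ν₁) ^ 2 * (1 / 4 - w * (1 - w)) := by
        field_simp
        ring
      nlinarith [sq_nonneg (m₁ * u / ν₁)]
    have h4 : (X * Y) ^ p ≤ (C ^ (2:ℕ)) ^ p :=
      Real.rpow_le_rpow (by positivity) hXY (by positivity)
    have h5 : (C ^ (2:ℕ)) ^ p = C ^ (2 * p) := by
      rw [← Real.rpow_natCast C 2, ← Real.rpow_mul hCpos.le]
      norm_num
    calc X ^ p * Z ^ q ≤ X ^ p * Y ^ p := by
          have hXp : 0 ≤ X ^ p := by positivity
          exact mul_le_mul_of_nonneg_left (h1.trans h2) hXp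
      _ = (X * Y) ^ p := h3
      _ ≤ C ^ (2 * p) := h4.trans_eq h5
  have core : C ^ (-(m₁ + ν₁)) ≤ X ^ (-(m₁ + ν₁) / 2) * Z ^ (-(m₂ + ν₂) / 2) := by
    have e1 : -(m₁ + ν₁) = -(2 * p) := by simp [hp]; ring
    have e2 : -(m₁ + ν₁) / 2 = -p := by simp [hp]; ring
    have e3 : -(m₂ + ν₂) / 2 = -q := by simp [hq]; ring
    rw [e2, e3, e1, Real.rpow_neg hCpos.le, Real.rpow_neg hXpos.le, Real.rpow_neg hZpos.le,
      ← mul_inv]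
    exact inv_anti₀ (by positivity) key
  have hpre : 0 ≤ K₀ m₁ m₂ ν₁ ν₂ * u ^ ((m₁ + m₂) / 2 - 1) * w ^ (m₁ / 2 - 1) *
      (1 - w) ^ (m₂ / 2 - 1) := by
    have := K₀_pos hm₁ hm₂ hν₁ hν₂
    positivity
  calc K₀ m₁ m₂ ν₁ ν₂ * u ^ ((m₁ + m₂) / 2 - 1) * w ^ (m₁ / 2 - 1) * (1 - w) ^ (m₂ / 2 - 1) *
        C ^ (-(m₁ + ν₁))
      ≤ K₀ m₁ m₂ ν₁ ν₂ * u ^ ((m₁ + m₂) / 2 - 1) * w ^ (m₁ / 2 - 1) * (1 - w) ^ (m₂ / 2 - 1) *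
        (X ^ (-(m₁ + ν₁) / 2) * Z ^ (-(m₂ + ν₂) / 2)) :=
        mul_le_mul_of_nonneg_left core hpre
    _ = K₀ m₁ m₂ ν₁ ν₂ * u ^ ((m₁ + m₂) / 2 - 1) * w ^ (m₁ / 2 - 1) * (1 - w) ^ (m₂ / 2 - 1) *
        X ^ (-(m₁ + ν₁) / 2) * Z ^ (-(m₂ + ν₂) / 2) := by ring
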